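/- Under the hypotheses of the renewal relation (ψ(u) = ∫_{(-∞,0)} ψ(y) dμ_u(y) with μ_u of total mass ψ_cl(u) > 0, 1 - ψ(y) = p_y(1 - ψ(0)) for y < 0, p₀ := ∫ p dμ₀ < 1, q₀ := (1 - ψ_cl(0))/(1 - p₀)), one has for every u ≥ 0: ψ(u) = ψ_cl(u) · (1 - q₀ · ∫_{(-∞,0)} p_y d ν_u(y)), where ν_u := μ_u / ψ_cl(u) is the normalized probability measure. -/

import Mathlib

open Real Filter Topology MeasureTheory Set

theorem renewal_psi_formula
    (ψ ψcl : ℝ → ℝ) (hψmeas : Measurable ψ)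
    (hψ01 : ∀ u, ψ u ∈ Icc (0 : ℝ) 1) (hψcl01 : ∀ u, ψcl u ∈ Icc (0 : ℝ) 1)
    (hψclpos : ∀ u, 0 < ψcl u)
    (μ : ℝ → Measure ℝ) (hμfin : ∀ u, IsFiniteMeasure (μ u))
    (hμsupp : ∀ u, μ u (Ici 0) = 0)
    (hμmass : ∀ u, ((μ u) Set.univ).toReal = ψcl u)
    (hmodel : ∀ u ≥ 0, ψ u = ∫ y, ψ y ∂(μ u))
    (p : ℝ → ℝ) (hpmeas : Measurable p) (hp01 : ∀ y < 0, p y ∈ Icc (0 : ℝ) 1)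
    (hrenew : ∀ y < 0, 1 - ψ y = p y * (1 - ψ 0))
    (p₀ : ℝ) (hp₀ : p₀ = ∫ y, p y ∂(μ 0)) (hp₀lt : p₀ < 1)
    (q₀ : ℝ) (hq₀ : q₀ = (1 - ψcl 0) / (1 - p₀)) :
    ∀ u ≥ (0 : ℝ),
      ψ u = ψcl u *
        (1 - q₀ * ∫ y, p y ∂(ENNReal.ofReal (ψcl u)⁻¹ • μ u)) := by
  -- a.e. y < 0
  have hae : ∀ u, ∀ᵐ y ∂(μ u), y < 0 := by
    intro u
    rw [ae_iff]
    convert hμsupp u using 2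
    ext y
    simp [not_lt]
  have hψae : ∀ u, ψ =ᵐ[μ u] fun y => 1 - p y * (1 - ψ 0) := by
    intro u
    filter_upwards [hae u] with y hy
    have := hrenew y hy
    linarith
  have hint_p : ∀ u, Integrable p (μ u) := by
    intro u
    haveI := hμfin u
    refine Integrable.mono' (integrable_const (1 : ℝ))
      hpmeas.aestronglyMeasurable ?_
    filter_upwards [hae u] with y hy
    have h := hp01 y hy
    rw [Real.norm_eq_abs, abs_of_nonneg h.1]; exact h.2
  -- key identity: ψ u = ψcl u - (1 - ψ 0) * ∫ p dμ u for u ≥ 0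
  have hkey : ∀ u ≥ (0:ℝ), ψ u = ψcl u - (1 - ψ 0) * ∫ y, p y ∂(μ u) := by
    intro u hu
    haveI := hμfin u
    rw [hmodel u hu, integral_congr_ae (hψae u), integral_sub (integrable_const 1)
      ((hint_p u).mul_const _), integral_const, integral_mul_const, smul_eq_mul,
      mul_one, Measure.real, hμmass u]
    ring
  have h0 : 1 - ψ 0 = q₀ := by
    have := hkey 0 le_rfl
    rw [← hp₀] at this
    rw [hq₀, eq_div_iff (by linarith : (1:ℝ) - p₀ ≠ 0)]
    linear_combination -this
  intro u hu
  haveI := hμfin u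
  have hne : ψcl u ≠ 0 := (hψclpos u).ne'
  rw [integral_smul_measure, ENNReal.toReal_ofReal (inv_nonneg.2 (hψclpos u).le),
    hkey u hu, h0, smul_eq_mul]
  field_simp
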